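/- Let q_1, ..., q_n : ℝ^n → ℝ be positive semidefinite quadratic forms and suppose q_n(x) = ⟨u, x⟩^2 for a unit vector u ∈ ℝ^n. Let H = u^⊥ and let q̂_1, ..., q̂_{n-1} : H → ℝ be the restrictions of q_1, ..., q_{n-1} to H. Then D(q_1, ..., q_n) = D(q̂_1, ..., q̂_{n-1}), where the mixed discriminant of the restricted forms is computed with respect to any orthonormal basis of H. -/

import Mathlib

open Matrix

/-- The mixed discriminant of `n` real `n x n` matrices: the coefficient of the monomial
`t_1 t_2 ... t_n` in `det (t_1 Q_1 + ... + t_n Q_n)`. -/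
noncomputable def mixedDiscriminant {n : ℕ} (Q : Fin n → Matrix (Fin n) (Fin n) ℝ) : ℝ :=
  MvPolynomial.coeff (∑ i : Fin n, Finsupp.single i 1)
    (Matrix.det (∑ i, (MvPolynomial.X i : MvPolynomial (Fin n) ℝ) • (Q i).map MvPolynomial.C))

section Aux
open MvPolynomial

variable {n : ℕ}
local notation "CC" => (MvPolynomial.C : ℝ →+* MvPolynomial (Fin n) ℝ)

private lemma sum_single_eq_iff (r : Fin n → Fin n) :
    (∑ j, Finsupp.single (r j) 1 : Fin n →₀ ℕ) = ∑ i, Finsupp.single i 1 ↔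
      Function.Bijective r := by
  constructor
  · intro h
    rw [← Finite.surjective_iff_bijective]
    intro i
    have h2 := DFunLike.congr_fun h i
    simp only [Finsupp.coe_finset_sum, Finset.sum_apply, Finsupp.single_apply] at h2
    rw [Finset.sum_ite_eq' Finset.univ i (fun _ => 1)] at h2
    simp only [Finset.mem_univ, if_true] at h2
    by_contra hc
    push_neg at hc
    have : (∑ j, if r j = i then 1 else 0 : ℕ) = 0 := by
      refine Finset.sum_eq_zero fun j _ => ?_
      simp [hc j]
    omega
  · intro h
    exact Equiv.sum_comp (Equiv.ofBijective r h) (fun i => Finsupp.single i 1)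

private lemma mixedDiscriminant_eq_sum_perm (Q : Fin n → Matrix (Fin n) (Fin n) ℝ) :
    mixedDiscriminant Q =
      ∑ σ : Equiv.Perm (Fin n), Matrix.det (Matrix.of fun j k => Q (σ j) j k) := by
  have hdet : Matrix.det (∑ i, (MvPolynomial.X i : MvPolynomial (Fin n) ℝ) • (Q i).map MvPolynomial.C)
      = ∑ r : Fin n → Fin n, (∏ j, (X (r j) : MvPolynomial (Fin n) ℝ)) *
          C (Matrix.det (Matrix.of fun j k => Q (r j) j k)) := by
    have h1 : (∑ i, (MvPolynomial.X i : MvPolynomial (Fin n) ℝ) • (Q i).map MvPolynomial.C)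
        = Matrix.of (fun j => ∑ i, (X i : MvPolynomial (Fin n) ℝ) • ((Q i).map CC j)) := by
      ext j k; simp [Matrix.sum_apply, Matrix.map_apply]
    rw [h1]
    have h2 := (Matrix.detRowAlternating (R := MvPolynomial (Fin n) ℝ) (n := Fin n)).toMultilinearMap.map_sum
      (g := fun j i => (X i : MvPolynomial (Fin n) ℝ) • ((Q i).map CC j))
    refine h2.trans (Finset.sum_congr rfl fun r _ => ?_)
    rw [MultilinearMap.map_smul_univ]
    have h3 : ((Matrix.detRowAlternating (R := MvPolynomial (Fin n) ℝ)).toMultilinearMap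
          (fun j => ((Q (r j)).map CC j)) : MvPolynomial (Fin n) ℝ)
        = Matrix.det ((Matrix.of fun j k => Q (r j) j k).map CC) := rfl
    rw [h3, ← RingHom.mapMatrix_apply, ← RingHom.map_det, smul_eq_mul]
  rw [mixedDiscriminant, hdet]
  rw [MvPolynomial.coeff_sum]
  have hterm : ∀ r : Fin n → Fin n,
      MvPolynomial.coeff (∑ i : Fin n, Finsupp.single i 1)
        ((∏ j, (X (r j) : MvPolynomial (Fin n) ℝ)) *
          C (Matrix.det (Matrix.of fun j k => Q (r j) j k)))
      = if Function.Bijective r then Matrix.det (Matrix.of fun j k => Q (r j) j k) else 0 := by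
    intro r
    have hX : (∏ j, (X (r j) : MvPolynomial (Fin n) ℝ))
        = monomial (∑ j, Finsupp.single (r j) 1) 1 := by
      rw [monomial_sum_one]
      refine Finset.prod_congr rfl fun j _ => ?_
      rw [← X_pow_eq_monomial, pow_one]
    rw [hX, mul_comm, C_mul_monomial, mul_one, coeff_monomial]
    simp only [sum_single_eq_iff]
  simp only [hterm]
  rw [Finset.sum_ite, Finset.sum_const_zero, add_zero]
  refine (Finset.sum_bij (fun (σ : Equiv.Perm (Fin n)) _ => (σ : Fin n → Fin n)) ?_ ?_ ?_ ?_).symm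
  · intro σ _; exact Finset.mem_filter.2 ⟨Finset.mem_univ _, σ.bijective⟩
  · intro σ _ τ _ h; exact Equiv.coe_fn_injective h
  · intro r hr
    simp only [Finset.mem_filter] at hr
    exact ⟨Equiv.ofBijective r hr.2, Finset.mem_univ _, rfl⟩
  · intro σ _; rfl

private lemma mixedDiscriminant_comp_perm (Q : Fin n → Matrix (Fin n) (Fin n) ℝ)
    (π : Equiv.Perm (Fin n)) :
    mixedDiscriminant (fun i => Q (π i)) = mixedDiscriminant Q := by
  rw [mixedDiscriminant_eq_sum_perm, mixedDiscriminant_eq_sum_perm]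
  exact Fintype.sum_equiv (Equiv.mulLeft π)
    (fun σ => Matrix.det (Matrix.of fun j k => Q (π (σ j)) j k))
    (fun σ => Matrix.det (Matrix.of fun j k => Q (σ j) j k))
    (fun σ => rfl)

private lemma mixedDiscriminant_conj (Q : Fin n → Matrix (Fin n) (Fin n) ℝ)
    (P : Matrix (Fin n) (Fin n) ℝ) (hP : Pᵀ * P = 1) :
    mixedDiscriminant (fun i => Pᵀ * Q i * P) = mixedDiscriminant Q := by
  unfold mixedDiscriminant
  congr 1
  have h1 : (∑ i, (X i : MvPolynomial (Fin n) ℝ) • ((Pᵀ * Q i * P).map CC))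
      = (Pᵀ.map CC) * (∑ i, (X i : MvPolynomial (Fin n) ℝ) • (Q i).map CC) * (P.map CC) := by
    rw [Matrix.mul_sum, Finset.sum_mul]
    refine Finset.sum_congr rfl fun i _ => ?_
    rw [Matrix.map_mul, Matrix.map_mul, Matrix.mul_smul, Matrix.smul_mul]
  rw [h1, Matrix.det_mul, Matrix.det_mul]
  have h2 : (Pᵀ.map CC).det * (P.map CC).det = 1 := by
    rw [← Matrix.det_mul, ← Matrix.map_mul, hP, Matrix.map_one CC (map_zero CC) (map_one CC),
      Matrix.det_one]
  calc (Pᵀ.map CC).det * (∑ i, (X i : MvPolynomial (Fin n) ℝ) • (Q i).map CC).det * (P.map CC).det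
      = ((Pᵀ.map CC).det * (P.map CC).det) *
        (∑ i, (X i : MvPolynomial (Fin n) ℝ) • (Q i).map CC).det := by ring
    _ = _ := by rw [h2, one_mul]

end Aux

private lemma mixedDiscriminant_block {m : ℕ}
    (A : Fin (m+1) → Matrix (Fin (m+1)) (Fin (m+1)) ℝ)
    (hA : A 0 = Matrix.of fun j k => if j = 0 ∧ k = 0 then 1 else 0) :
    mixedDiscriminant A =
      mixedDiscriminant (fun i : Fin m => Matrix.of fun j k => A i.succ j.succ k.succ) := by
  rw [mixedDiscriminant_eq_sum_perm, mixedDiscriminant_eq_sum_perm]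
  rw [← Equiv.sum_comp Equiv.Perm.decomposeFin.symm
    (fun σ => Matrix.det (Matrix.of fun j k => A (σ j) j k))]
  rw [Fintype.sum_prod_type]
  rw [Finset.sum_eq_single (0 : Fin (m+1))]
  · refine Finset.sum_congr rfl fun τ _ => ?_
    set σ := Equiv.Perm.decomposeFin.symm (0, τ) with hσ
    have hσ0 : σ 0 = 0 := Equiv.Perm.decomposeFin_symm_apply_zero 0 τ
    have hσs : ∀ i : Fin m, σ i.succ = (τ i).succ := by
      intro i
      rw [hσ, Equiv.Perm.decomposeFin_symm_apply_succ, Equiv.swap_self, Equiv.refl_apply]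
    rw [Matrix.det_succ_row_zero]
    rw [Finset.sum_eq_single (0 : Fin (m+1))]
    · rw [show (Matrix.of fun j k => A (σ j) j k) 0 0 = 1 by simp [hσ0, hA]]
      simp only [Fin.val_zero, pow_zero, one_mul, Fin.succAbove_zero]
      refine congrArg Matrix.det ?_
      ext j k
      simp [Matrix.submatrix_apply, hσs]
    · intro k _ hk
      rw [show (Matrix.of fun j k => A (σ j) j k) 0 k = 0 by simp [hσ0, hA, hk]]
      ring
    · intro h; exact absurd (Finset.mem_univ _) h
  · intro p _ hp
    refine Finset.sum_eq_zero fun τ _ => ?_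
    set σ := Equiv.Perm.decomposeFin.symm (p, τ) with hσ
    have h0 : σ (σ.symm 0) = 0 := σ.apply_symm_apply 0
    have hj : σ.symm 0 ≠ 0 := by
      intro h
      apply hp
      rw [← Equiv.Perm.decomposeFin_symm_apply_zero p τ, ← hσ]
      rw [h] at h0
      exact h0
    exact Matrix.det_eq_zero_of_row_eq_zero (σ.symm 0)
      (fun k => by simp [Matrix.of_apply, h0, hA, hj])
  · intro h; exact absurd (Finset.mem_univ _) h

theorem mixedDiscriminant_restrict_hyperplane {m : ℕ}
    (Q : Fin (m + 1) → Matrix (Fin (m + 1)) (Fin (m + 1)) ℝ)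
    (hpsd : ∀ i, (Q i).PosSemidef)
    (u : EuclideanSpace ℝ (Fin (m + 1))) (hu : ‖u‖ = 1)
    (hlast : Q (Fin.last m) = Matrix.vecMulVec u u)
    (b : Fin m → EuclideanSpace ℝ (Fin (m + 1)))
    (hb : Orthonormal ℝ b) (hbu : ∀ j, @inner ℝ _ _ u (b j) = 0) :
    mixedDiscriminant Q =
      mixedDiscriminant (fun i : Fin m =>
        Matrix.of fun j k : Fin m => b j ⬝ᵥ Q i.castSucc *ᵥ b k) := by
  classical
  set c : Fin (m+1) → EuclideanSpace ℝ (Fin (m+1)) := Fin.cons u b with hc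
  have hinner : ∀ a a' : Fin (m+1), (∑ p, c a p * c a' p) = if a = a' then (1:ℝ) else 0 := by
    have key : ∀ a a' : Fin (m+1), (inner ℝ (c a) (c a') : ℝ) = if a = a' then (1:ℝ) else 0 := by
      intro a a'
      induction a using Fin.cases with
      | zero =>
        induction a' using Fin.cases with
        | zero =>
          rw [if_pos rfl]
          simp only [hc, Fin.cons_zero]
          rw [real_inner_self_eq_norm_sq, hu, one_pow]
        | succ j =>
          simp only [hc, Fin.cons_zero, Fin.cons_succ]
          rw [if_neg (by simp [(Fin.succ_ne_zero j).symm])]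
          exact hbu j
      | succ i =>
        induction a' using Fin.cases with
        | zero =>
          simp only [hc, Fin.cons_zero, Fin.cons_succ]
          rw [if_neg (Fin.succ_ne_zero i), real_inner_comm]
          exact hbu i
        | succ j =>
          simp only [hc, Fin.cons_succ, Fin.succ_inj]
          exact orthonormal_iff_ite.mp hb i j
    intro a a'
    rw [← key a a']
    simp [PiLp.inner_apply, RCLike.inner_apply, conj_trivial, mul_comm]
  set O : Matrix (Fin (m+1)) (Fin (m+1)) ℝ := Matrix.of fun j k => c k j with hO
  have hOO : Oᵀ * O = 1 := by
    ext a a'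
    rw [Matrix.mul_apply, Matrix.one_apply]
    simp only [hO, Matrix.transpose_apply, Matrix.of_apply]
    exact hinner a a'
  have hconj : ∀ (M : Matrix (Fin (m+1)) (Fin (m+1)) ℝ) (a a' : Fin (m+1)),
      (Oᵀ * M * O) a a' = ∑ p, ∑ q, c a p * (M p q * c a' q) := by
    intro M a a'
    rw [mul_assoc]
    simp [Matrix.mul_apply, Matrix.transpose_apply, Finset.mul_sum, hO]
  set π : Equiv.Perm (Fin (m+1)) := (finRotate (m+1)).symm with hπ
  have hπ0 : π 0 = Fin.last m := by rw [hπ, Equiv.symm_apply_eq, finRotate_last]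
  have hπs : ∀ i : Fin m, π i.succ = i.castSucc := by
    intro i
    rw [hπ, Equiv.symm_apply_eq, finRotate_succ_apply, Fin.coeSucc_eq_succ]
  have hA0 : Oᵀ * Q (π 0) * O = Matrix.of fun j k => if j = 0 ∧ k = 0 then 1 else 0 := by
    ext a a'
    rw [hconj, hπ0, hlast]
    have : (∑ p, ∑ q, c a p * (Matrix.vecMulVec u u p q * c a' q))
        = (∑ p, c a p * u p) * (∑ q, u q * c a' q) := by
      rw [Finset.sum_mul_sum]
      refine Finset.sum_congr rfl fun p _ => Finset.sum_congr rfl fun q _ => ?_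
      rw [Matrix.vecMulVec_apply]
      ring
    rw [this]
    have h1 : (∑ p, c a p * u p) = if a = 0 then (1:ℝ) else 0 := by
      have := hinner a 0
      simpa [hc, Fin.cons_zero] using this
    have h2 : (∑ q, u q * c a' q) = if (0 : Fin (m+1)) = a' then (1:ℝ) else 0 := by
      rw [← hinner 0 a']
      exact Finset.sum_congr rfl fun q _ => by rw [hc]; simp [Fin.cons_zero]
    rw [h1, h2, Matrix.of_apply]
    by_cases ha : a = 0 <;> by_cases ha' : a' = 0 <;> simp [ha, ha', eq_comm]
  have h1 : mixedDiscriminant Q = mixedDiscriminant (fun i => Oᵀ * Q (π i) * O) :=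
    ((mixedDiscriminant_conj (fun i => Q (π i)) O hOO).trans
      (mixedDiscriminant_comp_perm Q π)).symm
  rw [h1, mixedDiscriminant_block (fun i => Oᵀ * Q (π i) * O) hA0]
  refine congrArg mixedDiscriminant (funext fun i => ?_)
  ext j k
  rw [Matrix.of_apply, Matrix.of_apply, hconj, hπs]
  have : b j ⬝ᵥ Q i.castSucc *ᵥ b k = ∑ p, ∑ q, b j p * (Q i.castSucc p q * b k q) := by
    simp [dotProduct, Matrix.mulVec, Finset.mul_sum]
  rw [this]
  refine Finset.sum_congr rfl fun p _ => Finset.sum_congr rfl fun q _ => ?_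
  rw [hc]
  simp [Fin.cons_succ]
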